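/- Let T ∈ L(X) be a pseudo invertible operator and S ∈ comm²(T) a pseudo inverse of T (S = S²T). Then TS is a projection, (M, N) := (R(TS), N(TS)) is a pair of closed complementary subspaces invariant under every operator commuting with T, T|_M is invertible, and S = (T|_M)^{-1} ⊕ 0|_N with respect to X = M ⊕ N. -/

import Mathlib

theorem pseudo_inverse_structure {X : Type*} [NormedAddCommGroup X]
    [NormedSpace ℂ X] [CompleteSpace X] (T S : X →L[ℂ] X)
    (hS2 : ∀ U : X →L[ℂ] X, Commute U T → Commute U S) (hS : S = S ^ 2 * T) :
    (T * S) * (T * S) = T * S ∧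
    IsClosed ((LinearMap.range ((T * S : X →L[ℂ] X) : X →ₗ[ℂ] X) : Submodule ℂ X) : Set X) ∧
    IsClosed ((LinearMap.ker ((T * S : X →L[ℂ] X) : X →ₗ[ℂ] X) : Submodule ℂ X) : Set X) ∧
    IsCompl (LinearMap.range ((T * S : X →L[ℂ] X) : X →ₗ[ℂ] X)) (LinearMap.ker ((T * S : X →L[ℂ] X) : X →ₗ[ℂ] X)) ∧
    (∀ U : X →L[ℂ] X, Commute U T →
      (∀ x ∈ LinearMap.range ((T * S : X →L[ℂ] X) : X →ₗ[ℂ] X), U x ∈ LinearMap.range ((T * S : X →L[ℂ] X) : X →ₗ[ℂ] X)) ∧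
      (∀ x ∈ LinearMap.ker ((T * S : X →L[ℂ] X) : X →ₗ[ℂ] X), U x ∈ LinearMap.ker ((T * S : X →L[ℂ] X) : X →ₗ[ℂ] X))) ∧
    (∀ x ∈ LinearMap.range ((T * S : X →L[ℂ] X) : X →ₗ[ℂ] X), T x ∈ LinearMap.range ((T * S : X →L[ℂ] X) : X →ₗ[ℂ] X)) ∧
    (∀ x ∈ LinearMap.range ((T * S : X →L[ℂ] X) : X →ₗ[ℂ] X), T x = 0 → x = 0) ∧
    (∀ y ∈ LinearMap.range ((T * S : X →L[ℂ] X) : X →ₗ[ℂ] X), ∃ x ∈ LinearMap.range ((T * S : X →L[ℂ] X) : X →ₗ[ℂ] X), T x = y) ∧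
    (∀ x ∈ LinearMap.range ((T * S : X →L[ℂ] X) : X →ₗ[ℂ] X), S x ∈ LinearMap.range ((T * S : X →L[ℂ] X) : X →ₗ[ℂ] X) ∧ T (S x) = x) ∧
    (∀ x ∈ LinearMap.ker ((T * S : X →L[ℂ] X) : X →ₗ[ℂ] X), S x = 0) := by
  have hTS : Commute T S := hS2 T (Commute.refl T)
  have hts : T * S = S * T := hTS.eq
  -- idempotency
  have hP : (T * S) * (T * S) = T * S := by
    calc (T * S) * (T * S) = T * (S * (T * S)) := mul_assoc T S (T * S)
    _ = T * (S * (S * T)) := by rw [hts]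
    _ = T * (S ^ 2 * T) := by rw [sq, mul_assoc]
    _ = T * S := by rw [← hS]
  have hPapp : ∀ x, (T * S) ((T * S) x) = (T * S) x := fun x => DFunLike.congr_fun hP x
  have hmem : ∀ x, x ∈ LinearMap.range ((T * S : X →L[ℂ] X) : X →ₗ[ℂ] X) ↔ (T * S) x = x := by
    intro x
    constructor
    · rintro ⟨y, rfl⟩; exact hPapp y
    · intro h; exact ⟨x, h⟩
  have hSP : S = S * (T * S) := by
    calc S = S ^ 2 * T := hS
    _ = S * (S * T) := by rw [sq, mul_assoc]
    _ = S * (T * S) := by rw [← hts]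
  have hSPapp : ∀ x, S ((T * S) x) = S x := fun x => (DFunLike.congr_fun hSP x).symm
  have hTP : T * (T * S) = (T * S) * T := by
    rw [hts, ← mul_assoc, ← hts]
  have hTPapp : ∀ x, T ((T * S) x) = (T * S) (T x) := fun x => DFunLike.congr_fun hTP x
  have hstapp : ∀ x, T (S x) = S (T x) := fun x => DFunLike.congr_fun hts x
  have hrange_eq : (LinearMap.range ((T * S : X →L[ℂ] X) : X →ₗ[ℂ] X) : Submodule ℂ X) = LinearMap.ker (((T * S) - 1 : X →L[ℂ] X) : X →ₗ[ℂ] X) := by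
    ext x
    rw [hmem, LinearMap.mem_ker]
    constructor
    · intro h
      simp only [ContinuousLinearMap.coe_coe, ContinuousLinearMap.sub_apply, ContinuousLinearMap.one_apply, h, sub_self]
    · intro h
      have h2 : (T * S) x - x = 0 := by simpa using h
      exact sub_eq_zero.mp h2
  refine ⟨hP, ?_, ?_, ?_, ?_, ?_, ?_, ?_, ?_, ?_⟩
  · rw [hrange_eq]
    exact ContinuousLinearMap.isClosed_ker _
  · exact ContinuousLinearMap.isClosed_ker _
  · constructor
    · rw [Submodule.disjoint_def]
      intro x hx hk
      rw [hmem] at hx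
      rw [LinearMap.mem_ker, ContinuousLinearMap.coe_coe] at hk
      rw [← hx, hk]
    · rw [codisjoint_iff, eq_top_iff]
      intro x _
      refine Submodule.mem_sup.mpr ⟨(T * S) x, ⟨x, rfl⟩, x - (T * S) x, ?_, by abel⟩
      rw [LinearMap.mem_ker, ContinuousLinearMap.coe_coe, map_sub, hPapp, sub_self]
  · intro U hU
    have hUS : Commute U S := hS2 U hU
    have hUP : U * (T * S) = (T * S) * U := by
      calc U * (T * S) = (U * T) * S := by rw [mul_assoc]
      _ = (T * U) * S := by rw [hU.eq]
      _ = T * (S * U) := by rw [mul_assoc, hUS.eq]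
      _ = (T * S) * U := by rw [mul_assoc]
    have hUPapp : ∀ x, U ((T * S) x) = (T * S) (U x) := fun x => DFunLike.congr_fun hUP x
    constructor
    · intro x hx
      rw [hmem] at hx ⊢
      calc (T * S) (U x) = U ((T * S) x) := (hUPapp x).symm
      _ = U x := by rw [hx]
    · intro x hx
      rw [LinearMap.mem_ker, ContinuousLinearMap.coe_coe] at hx ⊢
      rw [← hUPapp, hx, map_zero]
  · intro x hx
    rw [hmem] at hx ⊢
    calc (T * S) (T x) = T ((T * S) x) := (hTPapp x).symm
    _ = T x := by rw [hx]
  · intro x hx hT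
    rw [hmem] at hx
    have h0 : (T * S) x = 0 := by
      have : (T * S) x = S (T x) := by
        show T (S x) = S (T x)
        exact hstapp x
      rw [this, hT, map_zero]
    rw [← hx, h0]
  · intro y hy
    rw [hmem] at hy
    refine ⟨S y, ?_, ?_⟩
    · rw [hmem]
      calc (T * S) (S y) = T (S (S y)) := rfl
      _ = S (T (S y)) := hstapp (S y)
      _ = S ((T * S) y) := rfl
      _ = S y := by rw [hy]
    · show T (S y) = y
      calc T (S y) = (T * S) y := rfl
      _ = y := hy
  · intro x hx
    rw [hmem] at hx
    refine ⟨?_, ?_⟩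
    · rw [hmem]
      calc (T * S) (S x) = T (S (S x)) := rfl
      _ = S (T (S x)) := hstapp (S x)
      _ = S ((T * S) x) := rfl
      _ = S x := by rw [hx]
    · show T (S x) = x
      calc T (S x) = (T * S) x := rfl
      _ = x := hx
  · intro x hx
    rw [LinearMap.mem_ker, ContinuousLinearMap.coe_coe] at hx
    rw [← hSPapp, hx, map_zero]
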